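/- Let C be a small monoidal category, W a class of morphisms of C containing all identity morphisms, and L : C ⥤ D a localization functor of C with respect to W. Write L_! : (C ⥤ Type) ⥤ (D ⥤ Type) for left Kan extension along L and ⊛ for the Day convolution product on C ⥤ Type. Assume that for every f : c₁ ⟶ c₁' in W and every g : c₂ ⟶ c₂' in W, the natural transformation of corepresentable functors Hom_C(c₁' ⊗ c₂', −) ⟶ Hom_C(c₁ ⊗ c₂, −) induced by f ⊗ g is sent by L_! to an isomorphism. Then for all natural transformations α : F ⟶ F' and β : G ⟶ G' in C ⥤ Type such that L_! α and L_! β are isomorphisms, the induced map on Day convolutions α ⊛ β : F ⊛ G ⟶ F' ⊛ G' is also sent by L_! to an isomorphism. -/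

import Mathlib

open CategoryTheory MonoidalCategory Opposite Limits

universe u

namespace DayStatement

variable {C : Type u} [SmallCategory C] [MonoidalCategory C]


/-- The external product `(x, y) ↦ F x × G y` of two `Type`-valued functors. -/
@[simps]
def extProd (F G : C ⥤ Type u) : C × C ⥤ Type u where
  obj p := F.obj p.1 × G.obj p.2
  map f := TypeCat.ofHom fun x => (F.map f.1 x.1, G.map f.2 x.2)

/-- The external product of two natural transformations. -/
@[simps]
def extProdMap {F F' G G' : C ⥤ Type u} (α : F ⟶ F') (β : G ⟶ G') :
    extProd F G ⟶ extProd F' G' where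
  app p := TypeCat.ofHom fun x => (α.app p.1 x.1, β.app p.2 x.2)
  naturality := by
    intro p q f
    ext x
    change (α.app q.1 (F.map f.1 x.1), β.app q.2 (G.map f.2 x.2)) = (F'.map f.1 (α.app p.1 x.1), G'.map f.2 (β.app p.2 x.2))
    simp [NatTrans.naturality_apply]

/-- The Day convolution `F ⊛ G`: the pointwise left Kan extension of the external
product of `F` and `G` along the tensor product functor `⊗ : C × C ⥤ C`. -/
noncomputable def day (F G : C ⥤ Type u) : C ⥤ Type u :=
  ((tensor C).lan).obj (extProd F G)

/-- Functoriality of the Day convolution. -/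
noncomputable def dayMap {F F' G G' : C ⥤ Type u} (α : F ⟶ F') (β : G ⟶ G') :
    day F G ⟶ day F' G' :=
  ((tensor C).lan).map (extProdMap α β)

/-- transfer of bijectivity along a commuting square of equivalences -/
lemma bij_conj {A A' B B' : Type*} (eA : A ≃ A') (eB : B ≃ B') {f : A → B} {f' : A' → B'}
    (h : ∀ a, f' (eA a) = eB (f a)) : Function.Bijective f' ↔ Function.Bijective f := by
  constructor
  · intro H
    have hf : f = ⇑eB.symm ∘ f' ∘ ⇑eA := by
      funext a
      simp [Function.comp, h a]
    rw [hf]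
    exact eB.symm.bijective.comp (H.comp eA.bijective)
  · intro H
    have hf : f' = ⇑eB ∘ f ∘ ⇑eA.symm := by
      funext a'
      have := h (eA.symm a')
      simpa using this
    rw [hf]
    exact eB.bijective.comp (H.comp eA.symm.bijective)

lemma isIso_lan_map_iff {D : Type u} [SmallCategory D] (W : MorphismProperty C)
    (L : C ⥤ D) [L.IsLocalization W] {F F' : C ⥤ Type u} (η : F ⟶ F') :
    IsIso ((Functor.lan L : (C ⥤ Type u) ⥤ (D ⥤ Type u)).map η) ↔
      ∀ (Φ : C ⥤ Type u), W.IsInvertedBy Φ →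
        Function.Bijective (fun τ : F' ⟶ Φ => η ≫ τ) := by
  let adj := L.lanAdjunction (Type u)
  constructor
  · intro hiso Φ hΦ
    let K : D ⥤ Type u := Localization.lift Φ hΦ L
    let ι : L ⋙ K ≅ Φ := Localization.fac Φ hΦ L
    let eA : (F' ⟶ Φ) ≃ (L.lan.obj F' ⟶ K) :=
      { toFun := fun τ => (adj.homEquiv F' K).symm (τ ≫ ι.inv)
        invFun := fun u => (adj.homEquiv F' K u) ≫ ι.hom
        left_inv := fun τ => by
          dsimp only
          rw [Equiv.apply_symm_apply, Category.assoc, Iso.inv_hom_id, Category.comp_id]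
        right_inv := fun u => by
          dsimp only
          rw [Category.assoc, Iso.hom_inv_id, Category.comp_id, Equiv.symm_apply_apply] }
    let eB : (F ⟶ Φ) ≃ (L.lan.obj F ⟶ K) :=
      { toFun := fun τ => (adj.homEquiv F K).symm (τ ≫ ι.inv)
        invFun := fun u => (adj.homEquiv F K u) ≫ ι.hom
        left_inv := fun τ => by
          dsimp only
          rw [Equiv.apply_symm_apply, Category.assoc, Iso.inv_hom_id, Category.comp_id]
        right_inv := fun u => by
          dsimp only
          rw [Category.assoc, Iso.hom_inv_id, Category.comp_id, Equiv.symm_apply_apply] }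
    refine (bij_conj eA eB (f := fun τ : F' ⟶ Φ => η ≫ τ)
      (f' := fun u => L.lan.map η ≫ u) (fun τ => ?_)).1
      ((isIso_iff_coyoneda_map_bijective (L.lan.map η)).1 hiso K)
    show L.lan.map η ≫ (adj.homEquiv F' K).symm (τ ≫ ι.inv)
      = (adj.homEquiv F K).symm ((η ≫ τ) ≫ ι.inv)
    rw [Category.assoc]
    exact (adj.homEquiv_naturality_left_symm η (τ ≫ ι.inv)).symm
  · intro h
    rw [isIso_iff_coyoneda_map_bijective]
    intro K
    have hK : W.IsInvertedBy (L ⋙ K) := by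
      intro x y w hw
      have : IsIso (L.map w) := Localization.inverts L W w hw
      show IsIso (K.map (L.map w))
      infer_instance
    exact (bij_conj (adj.homEquiv F' K).symm (adj.homEquiv F K).symm
      (f := fun τ : F' ⟶ (L ⋙ K) => η ≫ τ)
      (f' := fun u => L.lan.map η ≫ u)
      (fun τ => (Adjunction.homEquiv_naturality_left_symm adj η τ).symm)).2 (h (L ⋙ K) hK)

lemma inverted_tensor {D : Type u} [SmallCategory D] (W : MorphismProperty C)
    (L : C ⥤ D) [L.IsLocalization W]
    (hW : ∀ {c₁ c₁' c₂ c₂' : C} (f : c₁ ⟶ c₁') (g : c₂ ⟶ c₂'), W f → W g →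
      IsIso ((Functor.lan L : (C ⥤ Type u) ⥤ (D ⥤ Type u)).map
        (coyoneda.map (Quiver.Hom.op (f ⊗ₘ g)))))
    (Φ : C ⥤ Type u) (hΦ : W.IsInvertedBy Φ)
    {c₁ c₁' c₂ c₂' : C} (f : c₁ ⟶ c₁') (g : c₂ ⟶ c₂') (hf : W f) (hg : W g) :
    IsIso (Φ.map (f ⊗ₘ g)) := by
  have h := (isIso_lan_map_iff W L (coyoneda.map (Quiver.Hom.op (f ⊗ₘ g)))).1
    (hW f g hf hg) Φ hΦ
  rw [isIso_iff_bijective]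
  exact (bij_conj coyonedaEquiv coyonedaEquiv
    (f := fun τ : coyoneda.obj (op ((c₁ ⊗ c₂ : C))) ⟶ Φ => coyoneda.map (Quiver.Hom.op (f ⊗ₘ g)) ≫ τ)
    (f' := Φ.map (f ⊗ₘ g)) (fun τ => coyonedaEquiv_naturality (F := Φ) τ (f ⊗ₘ g))).2 h


section Curry

variable (Ψ : C × C ⥤ Type u)

/-- `c₁ ↦ (H ⟶ Ψ (c₁, -))`. -/
def R1 (H : C ⥤ Type u) : C ⥤ Type u :=
  Functor.curryObj Ψ ⋙ coyoneda.obj (op H)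

/-- `c₂ ↦ (A ⟶ Ψ (-, c₂))`. -/
def R2 (A : C ⥤ Type u) : C ⥤ Type u :=
  (Functor.curryObj Ψ).flip ⋙ coyoneda.obj (op A)

/-- currying in the first variable -/
def E1 (A H : C ⥤ Type u) : (extProd A H ⟶ Ψ) ≃ (A ⟶ R1 Ψ H) where
  toFun θ :=
    { app := fun c₁ => TypeCat.ofHom fun x =>
        { app := fun c₂ => TypeCat.ofHom fun y => θ.app (c₁, c₂) (x, y)
          naturality := fun c₂ c₂' g => by
            refine ConcreteCategory.hom_ext _ _ fun y => ?_
            have := NatTrans.naturality_apply θ (show (c₁, c₂) ⟶ (c₁, c₂') from (𝟙 c₁, g)) ((x, y) : A.obj _ × H.obj _)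
            simp [Functor.curryObj] at this ⊢
            exact this }
      naturality := fun c₁ c₁' h => by
        refine ConcreteCategory.hom_ext _ _ fun x => ?_
        apply NatTrans.ext
        funext c₂
        refine ConcreteCategory.hom_ext _ _ fun y => ?_
        have := NatTrans.naturality_apply θ (show (c₁, c₂) ⟶ (c₁', c₂) from (h, 𝟙 c₂)) ((x, y) : A.obj _ × H.obj _)
        simp [R1, Functor.curryObj] at this ⊢
        exact this }
  invFun ρ :=
    { app := fun p => TypeCat.ofHom fun z => (ρ.app p.1 z.1).app p.2 z.2
      naturality := fun p q f => by
        refine ConcreteCategory.hom_ext _ _ fun z => ?_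
        obtain ⟨z1, z2⟩ := z
        show (ρ.app q.1 (A.map f.1 z1)).app q.2 (H.map f.2 z2)
          = Ψ.map f ((ρ.app p.1 z1).app p.2 z2)
        rw [NatTrans.naturality_apply ρ f.1 z1]
        change ((Functor.curryObj Ψ).map f.1).app q.2 ((ρ.app p.1 z1).app q.2 (H.map f.2 z2)) = _
        rw [NatTrans.naturality_apply (ρ.app p.1 z1) f.2 z2]
        change Ψ.map (show (p.1, q.2) ⟶ q from (f.1, 𝟙 q.2)) (Ψ.map (show p ⟶ (p.1, q.2) from (𝟙 p.1, f.2)) ((ρ.app p.1 z1).app p.2 z2)) = _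
        have e : ((𝟙 p.1, f.2) : p ⟶ (p.1, q.2)) ≫ ((f.1, 𝟙 q.2) : (p.1, q.2) ⟶ q) = f :=
          Prod.ext (by simp) (by simp)
        rw [← Functor.map_comp_apply, e] }
  left_inv θ := rfl
  right_inv ρ := rfl

/-- currying in the second variable -/
def E2 (A H : C ⥤ Type u) : (extProd A H ⟶ Ψ) ≃ (H ⟶ R2 Ψ A) where
  toFun θ :=
    { app := fun c₂ => TypeCat.ofHom fun y =>
        { app := fun c₁ => TypeCat.ofHom fun x => θ.app (c₁, c₂) (x, y)
          naturality := fun c₁ c₁' h => by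
            refine ConcreteCategory.hom_ext _ _ fun x => ?_
            have := NatTrans.naturality_apply θ (show (c₁, c₂) ⟶ (c₁', c₂) from (h, 𝟙 c₂)) ((x, y) : A.obj _ × H.obj _)
            simp [Functor.curryObj] at this ⊢
            exact this }
      naturality := fun c₂ c₂' g => by
        refine ConcreteCategory.hom_ext _ _ fun y => ?_
        apply NatTrans.ext
        funext c₁
        refine ConcreteCategory.hom_ext _ _ fun x => ?_
        have := NatTrans.naturality_apply θ (show (c₁, c₂) ⟶ (c₁, c₂') from (𝟙 c₁, g)) ((x, y) : A.obj _ × H.obj _)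
        simp [R2, Functor.curryObj] at this ⊢
        exact this }
  invFun ρ :=
    { app := fun p => TypeCat.ofHom fun z => (ρ.app p.2 z.2).app p.1 z.1
      naturality := fun p q f => by
        refine ConcreteCategory.hom_ext _ _ fun z => ?_
        obtain ⟨z1, z2⟩ := z
        show (ρ.app q.2 (H.map f.2 z2)).app q.1 (A.map f.1 z1)
          = Ψ.map f ((ρ.app p.2 z2).app p.1 z1)
        rw [NatTrans.naturality_apply ρ f.2 z2]
        change ((Functor.curryObj Ψ).flip.map f.2).app q.1 ((ρ.app p.2 z2).app q.1 (A.map f.1 z1)) = _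
        rw [NatTrans.naturality_apply (ρ.app p.2 z2) f.1 z1]
        change Ψ.map (show (q.1, p.2) ⟶ q from (𝟙 q.1, f.2)) (Ψ.map (show p ⟶ (q.1, p.2) from (f.1, 𝟙 p.2)) ((ρ.app p.2 z2).app p.1 z1)) = _
        have e : ((f.1, 𝟙 p.2) : p ⟶ (q.1, p.2)) ≫ ((𝟙 q.1, f.2) : (q.1, p.2) ⟶ q) = f :=
          Prod.ext (by simp) (by simp)
        rw [← Functor.map_comp_apply, e] }
  left_inv θ := rfl
  right_inv ρ := rfl

lemma E1_natural_left {F F' H : C ⥤ Type u} (α : F ⟶ F') (θ : extProd F' H ⟶ Ψ) :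
    E1 Ψ F H (extProdMap α (𝟙 H) ≫ θ) = α ≫ E1 Ψ F' H θ := by
  apply NatTrans.ext
  funext c₁
  refine ConcreteCategory.hom_ext _ _ fun x => ?_
  apply NatTrans.ext
  funext c₂
  refine ConcreteCategory.hom_ext _ _ fun y => ?_
  rfl

lemma E2_natural_left {A G G' : C ⥤ Type u} (β : G ⟶ G') (θ : extProd A G' ⟶ Ψ) :
    E2 Ψ A G (extProdMap (𝟙 A) β ≫ θ) = β ≫ E2 Ψ A G' θ := by
  apply NatTrans.ext
  funext c₂
  refine ConcreteCategory.hom_ext _ _ fun y => ?_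
  apply NatTrans.ext
  funext c₁
  refine ConcreteCategory.hom_ext _ _ fun x => ?_
  rfl

end Curry

section Inverts

variable (W : MorphismProperty C) [W.ContainsIdentities] (Φ : C ⥤ Type u)
  (hΦ : ∀ {c₁ c₁' c₂ c₂' : C} (f : c₁ ⟶ c₁') (g : c₂ ⟶ c₂'), W f → W g →
    IsIso (Φ.map (f ⊗ₘ g)))

include hΦ

lemma R1_inverts (H : C ⥤ Type u) : W.IsInvertedBy (R1 (tensor C ⋙ Φ) H) := by
  intro c₁ c₁' h hw
  have : ∀ c₂ : C, IsIso (((Functor.curryObj (tensor C ⋙ Φ)).map h).app c₂) := by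
    intro c₂
    have := hΦ h (𝟙 c₂) hw (W.id_mem c₂)
    have e : ((Functor.curryObj (tensor C ⋙ Φ)).map h).app c₂ = Φ.map (h ⊗ₘ 𝟙 c₂) := rfl
    rw [e]
    exact this
  have : IsIso ((Functor.curryObj (tensor C ⋙ Φ)).map h) :=
    NatIso.isIso_of_isIso_app _
  show IsIso ((coyoneda.obj (op H)).map ((Functor.curryObj (tensor C ⋙ Φ)).map h))
  infer_instance

lemma R2_inverts (A : C ⥤ Type u) : W.IsInvertedBy (R2 (tensor C ⋙ Φ) A) := by
  intro c₂ c₂' g hw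
  have : ∀ c₁ : C, IsIso (((Functor.curryObj (tensor C ⋙ Φ)).flip.map g).app c₁) := by
    intro c₁
    have := hΦ (𝟙 c₁) g (W.id_mem c₁) hw
    have e : (((Functor.curryObj (tensor C ⋙ Φ)).flip.map g).app c₁) = Φ.map (𝟙 c₁ ⊗ₘ g) := rfl
    rw [e]
    exact this
  have : IsIso ((Functor.curryObj (tensor C ⋙ Φ)).flip.map g) :=
    NatIso.isIso_of_isIso_app _
  show IsIso ((coyoneda.obj (op A)).map ((Functor.curryObj (tensor C ⋙ Φ)).flip.map g))
  infer_instance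

end Inverts

/-- Let `C` be a small monoidal category, `W` a class of morphisms of
`C` containing all identities, and `L : C ⥤ D` a localization functor of `C` with
respect to `W`; let `L₁` denote left Kan extension along `L` and `⊛` the Day
convolution on `C ⥤ Type`.  If for all `f : c₁ ⟶ c₁'` and `g : c₂ ⟶ c₂'` in `W` the
induced map of corepresentables `Hom_C(c₁' ⊗ c₂', −) ⟶ Hom_C(c₁ ⊗ c₂, −)` is inverted
by `L₁`, then for all `α : F ⟶ F'` and `β : G ⟶ G'` inverted by `L₁`, the induced map
`α ⊛ β : F ⊛ G ⟶ F' ⊛ G'` on Day convolutions is also inverted by `L₁`. -/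
theorem statement6 {D : Type u} [SmallCategory D]
    (W : MorphismProperty C) [W.ContainsIdentities] (L : C ⥤ D) [L.IsLocalization W]
    (hW : ∀ {c₁ c₁' c₂ c₂' : C} (f : c₁ ⟶ c₁') (g : c₂ ⟶ c₂'), W f → W g →
      IsIso ((Functor.lan L : (C ⥤ Type u) ⥤ (D ⥤ Type u)).map
        (coyoneda.map (Quiver.Hom.op (f ⊗ₘ g)))))
    {F F' G G' : C ⥤ Type u} (α : F ⟶ F') (β : G ⟶ G')
    (hα : IsIso ((Functor.lan L : (C ⥤ Type u) ⥤ (D ⥤ Type u)).map α))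
    (hβ : IsIso ((Functor.lan L : (C ⥤ Type u) ⥤ (D ⥤ Type u)).map β)) :
    IsIso ((Functor.lan L : (C ⥤ Type u) ⥤ (D ⥤ Type u)).map (dayMap α β)) := by
  rw [isIso_lan_map_iff W L]
  intro Φ hΦ
  have hΦ' : ∀ {c₁ c₁' c₂ c₂' : C} (f : c₁ ⟶ c₁') (g : c₂ ⟶ c₂'), W f → W g →
      IsIso (Φ.map (f ⊗ₘ g)) := fun f g hf hg => inverted_tensor W L hW Φ hΦ f g hf hg
  have hα' := (isIso_lan_map_iff W L α).1 hα
  have hβ' := (isIso_lan_map_iff W L β).1 hβ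
  have hA : Function.Bijective
      (fun θ : extProd F' G' ⟶ tensor C ⋙ Φ => extProdMap (𝟙 F') β ≫ θ) :=
    (bij_conj (E2 (tensor C ⋙ Φ) F' G') (E2 (tensor C ⋙ Φ) F' G)
      (f := fun θ : extProd F' G' ⟶ tensor C ⋙ Φ => extProdMap (𝟙 F') β ≫ θ)
      (f' := fun ρ => β ≫ ρ)
      (fun θ => (E2_natural_left (tensor C ⋙ Φ) β θ).symm)).1
      (hβ' (R2 (tensor C ⋙ Φ) F') (R2_inverts W Φ hΦ' F'))
  have hB : Function.Bijective
      (fun θ : extProd F' G ⟶ tensor C ⋙ Φ => extProdMap α (𝟙 G) ≫ θ) :=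
    (bij_conj (E1 (tensor C ⋙ Φ) F' G) (E1 (tensor C ⋙ Φ) F G)
      (f := fun θ : extProd F' G ⟶ tensor C ⋙ Φ => extProdMap α (𝟙 G) ≫ θ)
      (f' := fun ρ => α ≫ ρ)
      (fun θ => (E1_natural_left (tensor C ⋙ Φ) α θ).symm)).1
      (hα' (R1 (tensor C ⋙ Φ) G) (R1_inverts W Φ hΦ' G))
  have hfact : (fun θ : extProd F' G' ⟶ tensor C ⋙ Φ => extProdMap α β ≫ θ)
      = (fun θ' : extProd F' G ⟶ tensor C ⋙ Φ => extProdMap α (𝟙 G) ≫ θ') ∘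
        (fun θ : extProd F' G' ⟶ tensor C ⋙ Φ => extProdMap (𝟙 F') β ≫ θ) := by
    funext θ
    dsimp
    rw [← Category.assoc]
    congr 1
  have hAB : Function.Bijective
      (fun θ : extProd F' G' ⟶ tensor C ⋙ Φ => extProdMap α β ≫ θ) := by
    rw [hfact]
    exact hB.comp hA
  let adjT := (tensor C).lanAdjunction (Type u)
  exact (bij_conj (adjT.homEquiv (extProd F' G') Φ).symm (adjT.homEquiv (extProd F G) Φ).symm
    (f := fun θ : extProd F' G' ⟶ tensor C ⋙ Φ => extProdMap α β ≫ θ)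
    (f' := fun τ : day F' G' ⟶ Φ => dayMap α β ≫ τ)
    (fun θ => (adjT.homEquiv_naturality_left_symm (extProdMap α β) θ).symm)).2 hAB

end DayStatement
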